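/- The number of distinct main eigenvalues of a graph G equals the largest k such that the vectors j, A(G)j, A(G)²j, …, A(G)^{k−1}j are linearly independent. -/

import Mathlib

open Matrix Polynomial

/-- `μ` is a main eigenvalue of the matrix `A`. -/
def Matrix.IsMainEig {n : ℕ} (A : Matrix (Fin n) (Fin n) ℝ) (μ : ℝ) : Prop :=
  ∃ v : Fin n → ℝ, A *ᵥ v = μ • v ∧ v ⬝ᵥ (fun _ => (1 : ℝ)) ≠ 0

private lemma mulVecSum {n : ℕ} (U : Matrix (Fin n) (Fin n) ℝ) {ι : Type*} (t : Finset ι)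
    (f : ι → (Fin n → ℝ)) : U *ᵥ (∑ i ∈ t, f i) = ∑ i ∈ t, U *ᵥ f i := by
  simp only [← Matrix.mulVecLin_apply]
  exact map_sum _ _ _

private lemma dotU {n : ℕ} {U : Matrix (Fin n) (Fin n) ℝ} (hU : Uᵀ * U = 1)
    (x y : Fin n → ℝ) : (U *ᵥ x) ⬝ᵥ (U *ᵥ y) = x ⬝ᵥ y := by
  rw [dotProduct_mulVec, vecMul_mulVec, hU, vecMul_one]

/-- The number of distinct main eigenvalues of `G` is the largest `k` such that
`j, A(G)j, A(G)²j, …, A(G)^{k-1}j` are linearly independent. -/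
theorem card_mainEig_eq_greatest_linearIndependent {n : ℕ} (G : SimpleGraph (Fin n))
    [DecidableRel G.Adj] (A : Matrix (Fin n) (Fin n) ℝ) (hA : A = G.adjMatrix ℝ)
    (s : ℕ) (hs : s = {μ : ℝ | A.IsMainEig μ}.ncard) :
    IsGreatest {k : ℕ | LinearIndependent ℝ
      (fun i : Fin k => (A ^ (i : ℕ)) *ᵥ fun _ => (1 : ℝ))} s := by
  classical
  have hsymm : A.IsHermitian := by
    rw [hA]
    exact (conjTranspose_eq_transpose_of_trivial _).trans G.isSymm_adjMatrix
  set jv : Fin n → ℝ := fun _ => (1 : ℝ) with hjv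
  set U : Matrix (Fin n) (Fin n) ℝ := (hsymm.eigenvectorUnitary : Matrix (Fin n) (Fin n) ℝ)
    with hUdef
  set lam : Fin n → ℝ := hsymm.eigenvalues with hlam
  have hstar : star U = Uᵀ := conjTranspose_eq_transpose_of_trivial _
  have hU1 : Uᵀ * U = 1 := by
    rw [← hstar]; exact mem_unitaryGroup_iff'.mp hsymm.eigenvectorUnitary.2
  have hU2 : U * Uᵀ = 1 := by
    rw [← hstar]; exact mem_unitaryGroup_iff.mp hsymm.eigenvectorUnitary.2
  have hspec : A = U * diagonal lam * Uᵀ := by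
    have h := hsymm.spectral_theorem
    rw [Unitary.conjStarAlgAut_apply, hstar, RCLike.ofReal_real_eq_id, Function.id_comp] at h
    exact h
  set c : Fin n → ℝ := Uᵀ *ᵥ jv with hc
  have hjc : U *ᵥ c = jv := by
    rw [hc, mulVec_mulVec, hU2, one_mulVec]
  have hAU : A * U = U * diagonal lam := by
    rw [hspec, mul_assoc, mul_assoc, hU1, mul_one]
  have hwp : ∀ p : ℕ, A ^ p *ᵥ jv = U *ᵥ (fun i => lam i ^ p * c i) := by
    intro p
    induction p with
    | zero =>
      simp only [pow_zero, one_mulVec]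
      rw [← hjc]
      have h0 : (fun i => (1 : ℝ) * c i) = c := by funext i; rw [one_mul]
      rw [h0]
    | succ p ih =>
      rw [pow_succ', ← mulVec_mulVec, ih, mulVec_mulVec, hAU, ← mulVec_mulVec]
      have hdiag : (diagonal lam *ᵥ fun i => lam i ^ p * c i)
          = fun i => lam i ^ (p + 1) * c i := by
        funext i
        rw [mulVec_diagonal]
        ring
      rw [hdiag]
  have hinjU : ∀ x : Fin n → ℝ, U *ᵥ x = 0 → x = 0 := by
    intro x hx
    have : Uᵀ *ᵥ (U *ᵥ x) = Uᵀ *ᵥ 0 := by rw [hx]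
    rwa [mulVec_mulVec, hU1, one_mulVec, mulVec_zero] at this
  set T : Finset ℝ := (Finset.univ.filter fun i => c i ≠ 0).image lam with hT
  -- characterization of main eigenvalues
  have hmain : {μ : ℝ | A.IsMainEig μ} = (↑T : Set ℝ) := by
    ext μ
    simp only [Set.mem_setOf_eq, hT, Finset.coe_image, Set.mem_image, Finset.mem_coe,
      Finset.mem_filter, Finset.mem_univ, true_and]
    constructor
    · rintro ⟨v, hv, hvj⟩
      set d : Fin n → ℝ := Uᵀ *ᵥ v with hd
      have hvd : U *ᵥ d = v := by rw [hd, mulVec_mulVec, hU2, one_mulVec]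
      have hdc : d ⬝ᵥ c ≠ 0 := by
        rw [← dotU hU1 d c, hvd, hjc]; exact hvj
      have heig : ∀ i, lam i * d i = μ * d i := by
        intro i
        have h1 : Uᵀ *ᵥ (A *ᵥ v) = Uᵀ *ᵥ (μ • v) := by rw [hv]
        rw [mulVec_smul, ← hd, mulVec_mulVec, hspec, ← mul_assoc, ← mul_assoc, hU1, one_mul,
          ← mulVec_mulVec, ← hd] at h1
        have h2 := congrFun h1 i
        simpa [mulVec_diagonal] using h2
      have hex : ∃ i, d i * c i ≠ 0 := by
        by_contra h
        push_neg at h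
        apply hdc
        simp only [dotProduct]
        exact Finset.sum_eq_zero fun i _ => h i
      obtain ⟨i, hi⟩ := hex
      have hdi : d i ≠ 0 := fun h => hi (by rw [h, zero_mul])
      have hci : c i ≠ 0 := fun h => hi (by rw [h, mul_zero])
      exact ⟨i, hci, mul_right_cancel₀ hdi (heig i)⟩
    · rintro ⟨i, hci, rfl⟩
      refine ⟨U *ᵥ Pi.single i 1, ?_, ?_⟩
      · rw [mulVec_mulVec, hAU, ← mulVec_mulVec, diagonal_mulVec_single]
        funext k
        simp only [mulVec_single, Pi.smul_apply, smul_eq_mul, op_smul_eq_mul]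
        ring
      · have : (U *ᵥ Pi.single i 1) ⬝ᵥ jv = Pi.single i 1 ⬝ᵥ c := by
          rw [← hjc, dotU hU1]
        rw [this, single_dotProduct, one_mul]
        exact hci
  have hsT : s = T.card := by rw [hs, hmain, Set.ncard_coe_finset]
  -- linear combinations
  have hcomb : ∀ (k : ℕ) (g : Fin k → ℝ),
      (∑ p : Fin k, g p • (A ^ (p : ℕ) *ᵥ jv))
        = U *ᵥ (fun i => c i * ∑ p : Fin k, g p * lam i ^ (p : ℕ)) := by
    intro k g
    have h1 : ∀ p ∈ Finset.univ, g p • (A ^ (p : ℕ) *ᵥ jv)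
        = U *ᵥ (g p • fun i => lam i ^ (p : ℕ) * c i) := by
      intro p _; rw [mulVec_smul, hwp]
    rw [Finset.sum_congr rfl h1, ← mulVecSum]
    have h2 : (∑ p : Fin k, g p • fun i => lam i ^ (p : ℕ) * c i)
        = fun i => c i * ∑ p : Fin k, g p * lam i ^ (p : ℕ) := by
      funext i
      simp only [Finset.sum_apply, Pi.smul_apply, smul_eq_mul, Finset.mul_sum]
      exact Finset.sum_congr rfl fun p _ => by ring
    rw [h2]
  constructor
  · -- membership : the first s vectors are linearly independent
    show LinearIndependent ℝ _
    rw [Fintype.linearIndependent_iff]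
    intro g hg
    set P : ℝ[X] := ∑ p : Fin s, C (g p) * X ^ (p : ℕ) with hP
    have hPev : ∀ i, c i * P.eval (lam i) = 0 := by
      have h0 : (fun i => c i * ∑ p : Fin s, g p * lam i ^ (p : ℕ)) = 0 := by
        apply hinjU
        rw [← hcomb s g]
        exact hg
      intro i
      have := congrFun h0 i
      simpa [hP, eval_finset_sum] using this
    have hProots : ∀ μ ∈ T, P.eval μ = 0 := by
      intro μ hμ
      rw [hT, Finset.mem_image] at hμ
      obtain ⟨i, hi, rfl⟩ := hμ
      rw [Finset.mem_filter] at hi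
      have := hPev i
      exact (mul_eq_zero.mp this).resolve_left hi.2
    have hP0 : P = 0 := by
      by_contra hPne
      have hdeg : P.degree < (s : ℕ) := by
        refine lt_of_le_of_lt (degree_sum_le _ _) ?_
        rw [Finset.sup_lt_iff (by exact WithBot.bot_lt_coe s)]
        intro p _
        exact lt_of_le_of_lt (degree_C_mul_X_pow_le _ _) (by exact_mod_cast p.2)
      have hnd : P.natDegree < s := (natDegree_lt_iff_degree_lt hPne).2 hdeg
      have hsub : T ⊆ P.roots.toFinset := by
        intro μ hμ
        rw [Multiset.mem_toFinset, mem_roots hPne]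
        exact hProots μ hμ
      have : T.card ≤ P.natDegree :=
        le_trans (Finset.card_le_card hsub)
          (le_trans (Multiset.toFinset_card_le _) (card_roots' P))
      omega
    intro p
    have hcoeff : P.coeff (p : ℕ) = g p := by
      rw [hP, finset_sum_coeff]
      rw [Finset.sum_eq_single p]
      · simp [coeff_C_mul, coeff_X_pow]
      · intro q _ hq
        have : (p : ℕ) ≠ (q : ℕ) := fun h => hq (Fin.ext h.symm)
        simp [coeff_C_mul, coeff_X_pow, this]
      · intro h; exact absurd (Finset.mem_univ p) h
    rw [hP0] at hcoeff
    simpa using hcoeff.symm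
  · -- upper bound
    intro k hk
    simp only [Set.mem_setOf_eq] at hk
    set vv : ℝ → (Fin n → ℝ) := fun μ => U *ᵥ (fun i => if lam i = μ then c i else 0) with hvv
    have hwspan : ∀ p : ℕ,
        (A ^ p *ᵥ jv) ∈ Submodule.span ℝ (↑(T.image vv) : Set (Fin n → ℝ)) := by
      intro p
      have hdecomp : A ^ p *ᵥ jv = ∑ μ ∈ T, (μ ^ p) • vv μ := by
        rw [hwp]
        have h1 : ∀ μ ∈ T, (μ ^ p) • vv μ
            = U *ᵥ ((μ ^ p) • fun i => if lam i = μ then c i else 0) := by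
          intro μ _; rw [mulVec_smul]
        rw [Finset.sum_congr rfl h1, ← mulVecSum]
        have h2 : (∑ μ ∈ T, (μ ^ p) • fun i => if lam i = μ then c i else 0)
            = fun i => lam i ^ p * c i := by
          funext i
          simp only [Finset.sum_apply, Pi.smul_apply, smul_eq_mul, mul_ite, mul_zero]
          rw [Finset.sum_ite_eq T (lam i) (fun μ => μ ^ p * c i)]
          by_cases hci : c i = 0
          · simp [hci]
          · have hmemT : lam i ∈ T := by
              rw [hT, Finset.mem_image]
              exact ⟨i, Finset.mem_filter.2 ⟨Finset.mem_univ i, hci⟩, rfl⟩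
            simp [hmemT]
        rw [h2]
      rw [hdecomp]
      exact Submodule.sum_mem _ fun μ hμ =>
        Submodule.smul_mem _ _ (Submodule.subset_span (Finset.mem_coe.2
          (Finset.mem_image_of_mem vv hμ)))
    set W := Submodule.span ℝ (↑(T.image vv) : Set (Fin n → ℝ)) with hW
    have hli' : LinearIndependent ℝ
        (fun p : Fin k => (⟨A ^ (p : ℕ) *ᵥ jv, hwspan p⟩ : W)) := by
      apply LinearIndependent.of_comp W.subtype
      exact hk
    have h1 : k ≤ Module.finrank ℝ W := by
      simpa using hli'.fintype_card_le_finrank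
    have h2 : Module.finrank ℝ W ≤ (T.image vv).card := finrank_span_finset_le_card _
    have h3 : (T.image vv).card ≤ T.card := Finset.card_image_le
    omega
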